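/- If {M₁,…,M_s} is a Hurwitz–Radon family of order n, then {A⊗E_n, Q⊗M₁, …, Q⊗M_s} is a Hurwitz–Radon family of order 2n, where A = [[0,1],[-1,0]] and Q = [[1,0],[0,-1]]. -/
import Mathlib


open Matrix Kronecker BigOperators

/-- A family of square real matrices is a Hurwitz–Radon family if each member is
orthogonal and skew-symmetric, and distinct members anticommute. -/
def IsHRFamily {ι σ : Type*} [Fintype ι] [DecidableEq ι] (A : σ → Matrix ι ι ℝ) : Prop :=
  (∀ i, A i * (A i)ᵀ = 1) ∧ (∀ i, A i = -(A i)ᵀ) ∧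
    ∀ i j, i ≠ j → A i * A j = -(A j * A i)

lemma neg_kronecker' {l m n p : Type*} (A : Matrix l m ℝ) (B : Matrix n p ℝ) :
    (-A) ⊗ₖ B = -(A ⊗ₖ B) := by
  ext ⟨i, j⟩ ⟨k, l⟩
  simp [Matrix.kroneckerMap_apply]

lemma kronecker_neg' {l m n p : Type*} (A : Matrix l m ℝ) (B : Matrix n p ℝ) :
    A ⊗ₖ (-B) = -(A ⊗ₖ B) := by
  ext ⟨i, j⟩ ⟨k, l⟩
  simp [Matrix.kroneckerMap_apply]

lemma kron_transpose' {l m n p : Type*} (A : Matrix l m ℝ) (B : Matrix n p ℝ) :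
    (A ⊗ₖ B)ᵀ = Aᵀ ⊗ₖ Bᵀ := (Matrix.kroneckerMap_transpose _ _ _).symm

theorem hr_family_double {ι : Type*} [Fintype ι] [DecidableEq ι] {s : ℕ}
    (M : Fin s → Matrix ι ι ℝ) (hM : IsHRFamily M) :
    IsHRFamily
      (Fin.cons (!![0, 1; -1, 0] ⊗ₖ (1 : Matrix ι ι ℝ))
        (fun i => !![1, 0; 0, -1] ⊗ₖ M i) :
        Fin (s + 1) → Matrix (Fin 2 × ι) (Fin 2 × ι) ℝ) := by
  obtain ⟨h1, h2, h3⟩ := hM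
  have hA : (!![0, 1; -1, 0] : Matrix (Fin 2) (Fin 2) ℝ) * !![0, 1; -1, 0]ᵀ = 1 := by
    ext i j; fin_cases i <;> fin_cases j <;>
      simp [Matrix.mul_apply, Fin.sum_univ_two, Matrix.one_apply,
        Matrix.transpose_apply, Matrix.vecHead, Matrix.vecTail]
  have hAT : (!![0, 1; -1, 0] : Matrix (Fin 2) (Fin 2) ℝ)ᵀ = -(!![0, 1; -1, 0]) := by
    ext i j; fin_cases i <;> fin_cases j <;> simp [Matrix.transpose_apply, Matrix.vecHead, Matrix.vecTail]
  have hQ : (!![1, 0; 0, -1] : Matrix (Fin 2) (Fin 2) ℝ)ᵀ = !![1, 0; 0, -1] := by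
    ext i j; fin_cases i <;> fin_cases j <;> simp [Matrix.transpose_apply, Matrix.vecHead, Matrix.vecTail]
  have hQQ : (!![1, 0; 0, -1] : Matrix (Fin 2) (Fin 2) ℝ) * !![1, 0; 0, -1] = 1 := by
    ext i j; fin_cases i <;> fin_cases j <;>
      simp [Matrix.mul_apply, Fin.sum_univ_two, Matrix.one_apply]
  have hAQ : (!![0, 1; -1, 0] : Matrix (Fin 2) (Fin 2) ℝ) * !![1, 0; 0, -1]
      = -(!![1, 0; 0, -1] * !![0, 1; -1, 0]) := by
    ext i j; fin_cases i <;> fin_cases j <;>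
      simp [Matrix.mul_apply, Fin.sum_univ_two]
  refine ⟨?_, ?_, ?_⟩
  · intro i
    rcases i.eq_zero_or_eq_succ with rfl | ⟨k, rfl⟩
    · rw [Fin.cons_zero, kron_transpose', ← Matrix.mul_kronecker_mul, hA,
        Matrix.transpose_one, mul_one, Matrix.one_kronecker_one]
    · rw [Fin.cons_succ, kron_transpose', ← Matrix.mul_kronecker_mul, hQ, hQQ,
        h1, Matrix.one_kronecker_one]
  · intro i
    rcases i.eq_zero_or_eq_succ with rfl | ⟨k, rfl⟩
    · rw [Fin.cons_zero, kron_transpose', hAT, Matrix.transpose_one, neg_kronecker', neg_neg]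
    · rw [Fin.cons_succ, kron_transpose', hQ]
      conv_lhs => rw [h2 k]
      rw [kronecker_neg']
  · intro i j hij
    rcases i.eq_zero_or_eq_succ with rfl | ⟨k, rfl⟩ <;>
      rcases j.eq_zero_or_eq_succ with rfl | ⟨l, rfl⟩
    · exact absurd rfl hij
    · rw [Fin.cons_zero, Fin.cons_succ, ← Matrix.mul_kronecker_mul,
        ← Matrix.mul_kronecker_mul, hAQ, one_mul, mul_one, neg_kronecker']
    · rw [Fin.cons_zero, Fin.cons_succ, ← Matrix.mul_kronecker_mul,
        ← Matrix.mul_kronecker_mul, hAQ, one_mul, mul_one, neg_kronecker', neg_neg]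
    · have hkl : k ≠ l := fun h => hij (by rw [h])
      rw [Fin.cons_succ, Fin.cons_succ, ← Matrix.mul_kronecker_mul,
        ← Matrix.mul_kronecker_mul, hQQ, h3 k l hkl, kronecker_neg']
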